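/- For distinct complex roots a_1,...,a_L (none zero) inside the unit circle and roots b_1,...,b_L, the contour integral (1/2πj) ∮_{|z|=1} (Ψ_A(z)−Ψ_B(z))(Ψ_A(z^{−1})−Ψ_B(z^{−1})) / ((1−Ψ_A(z))(1−Ψ_A(z^{−1}))) dz/z equals Σ_{k=1}^L [∏_{ℓ=1}^L (a_k−b_ℓ) / (a_k ∏_{ℓ≠k}(a_k−a_ℓ))] · [∏_{ℓ=1}^L (1−a_k b_ℓ*) / ∏_{ℓ=1}^L (1−a_k a_ℓ*) − 1], by the residue theorem applied to the poles at z = a_1,...,a_L and z = 0 inside the unit circle. -/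

import Mathlib

open Complex Real Finset

private lemma prod_comp_eq_of_map_eq {L : ℕ} {f g : Fin L → ℂ}
    (h : Finset.univ.val.map f = Finset.univ.val.map g) (p : ℂ → ℂ) :
    ∏ ℓ, p (f ℓ) = ∏ ℓ, p (g ℓ) := by
  rw [Finset.prod_eq_multiset_prod, Finset.prod_eq_multiset_prod]
  have h2 : (Finset.univ.val.map f).map p = (Finset.univ.val.map g).map p := by rw [h]
  rw [Multiset.map_map, Multiset.map_map] at h2
  exact congrArg Multiset.prod h2

private lemma circleIntegral_finset_sum {ι : Type*} (s : Finset ι) (c : ℂ) (R : ℝ)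
    (f : ι → ℂ → ℂ) (h : ∀ i ∈ s, CircleIntegrable (f i) c R) :
    (∮ z in C(c, R), ∑ i ∈ s, f i z) = ∑ i ∈ s, ∮ z in C(c, R), f i z := by
  simp only [circleIntegral, Finset.smul_sum]
  exact intervalIntegral.integral_finset_sum fun i hi => (h i hi).out

private lemma lagrange_prod_sub {L : ℕ} (a b : Fin L → ℂ) (hinj : Function.Injective a)
    (z : ℂ) :
    (∏ ℓ, (z - b ℓ)) - ∏ ℓ, (z - a ℓ) =
      ∑ k, (∏ ℓ, (a k - b ℓ)) * (∏ ℓ ∈ Finset.univ.erase k, (a k - a ℓ))⁻¹ *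
        ∏ ℓ ∈ Finset.univ.erase k, (z - a ℓ) := by
  rcases Nat.eq_zero_or_pos L with rfl | hL
  · simp
  classical
  set A : Polynomial ℂ := ∏ ℓ, (Polynomial.X - Polynomial.C (a ℓ)) with hA
  set B : Polynomial ℂ := ∏ ℓ, (Polynomial.X - Polynomial.C (b ℓ)) with hB
  have hAm : A.Monic := Polynomial.monic_prod_of_monic _ _ fun i _ => Polynomial.monic_X_sub_C _
  have hBm : B.Monic := Polynomial.monic_prod_of_monic _ _ fun i _ => Polynomial.monic_X_sub_C _
  have hdegA : A.degree = (L : ℕ) := by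
    rw [hA, Polynomial.degree_prod]
    simp [Polynomial.degree_X_sub_C]
  have hdegB : B.degree = (L : ℕ) := by
    rw [hB, Polynomial.degree_prod]
    simp [Polynomial.degree_X_sub_C]
  have hdlt : (B - A).degree < ((Finset.univ : Finset (Fin L)).card : ℕ) := by
    have h := Polynomial.degree_sub_lt (hdegB.trans hdegA.symm) hBm.ne_zero
      (by rw [hAm.leadingCoeff, hBm.leadingCoeff])
    rw [hdegB] at h
    simpa using h
  have key := Lagrange.eq_interpolate (v := a) (f := B - A) hinj.injOn hdlt
  have hevalL : Polynomial.eval z (B - A) = (∏ ℓ, (z - b ℓ)) - ∏ ℓ, (z - a ℓ) := by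
    simp [hA, hB, Polynomial.eval_prod]
  rw [← hevalL, key, Lagrange.interpolate_apply, Polynomial.eval_finset_sum]
  refine Finset.sum_congr rfl fun k _ => ?_
  rw [Polynomial.eval_mul, Polynomial.eval_C]
  have h1 : Polynomial.eval (a k) (B - A) = ∏ ℓ, (a k - b ℓ) := by
    have hzero : Polynomial.eval (a k) A = 0 := by
      rw [hA, Polynomial.eval_prod]
      exact Finset.prod_eq_zero (Finset.mem_univ k) (by simp)
    simp [hB, Polynomial.eval_prod, hzero]
  have h2 : Polynomial.eval z (Lagrange.basis Finset.univ a k) =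
      (∏ ℓ ∈ Finset.univ.erase k, (a k - a ℓ))⁻¹ * ∏ ℓ ∈ Finset.univ.erase k, (z - a ℓ) := by
    rw [Lagrange.basis, Polynomial.eval_prod, ← Finset.prod_inv_distrib,
      ← Finset.prod_mul_distrib]
    exact Finset.prod_congr rfl fun j _ => by simp [Lagrange.basisDivisor]
  rw [h1, h2, mul_assoc]

private lemma per_k_field (E Fi p P Q A z : ℂ) (hp : p ≠ 0) (hP : P ≠ 0) (hA : A ≠ 0)
    (hz : z ≠ 0) (hW : z - A ≠ 0) :
    E * Fi⁻¹ * p * (Q - P) / ((z - A) * p * P * z) =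
      E * Fi⁻¹ * A⁻¹ * ((Q / P - 1) / (z - A) - (Q / P - 1) / z) := by
  have key : A⁻¹ * ((Q / P - 1) / (z - A) - (Q / P - 1) / z) = (Q - P) / ((z - A) * P * z) := by
    rw [div_sub_one hP, div_div, div_div,
      div_sub_div _ _ (mul_ne_zero hP hW) (mul_ne_zero hP hz), inv_mul_eq_div, div_div,
      div_eq_div_iff
        (mul_ne_zero (mul_ne_zero (mul_ne_zero hP hW) (mul_ne_zero hP hz)) hA)
        (mul_ne_zero (mul_ne_zero hW hP) hz)]
    ring
  conv_rhs => rw [mul_assoc, key, ← mul_div_assoc]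
  rw [div_eq_div_iff (mul_ne_zero (mul_ne_zero (mul_ne_zero hW hp) hP) hz)
      (mul_ne_zero (mul_ne_zero hW hP) hz)]
  ring

/-- Residue evaluation of the AR-distance contour integral.  With
`1 - Ψ_A(z) = ∏_ℓ (1 - a_ℓ z⁻¹)` and `1 - Ψ_B(z) = ∏_ℓ (1 - b_ℓ z⁻¹)`, where
the `a_ℓ` are distinct, nonzero, of modulus `< 1`, the `b_ℓ` have modulus `< 1`,
and both root families are closed under complex conjugation (real
coefficients), the contour integral
`(1/2πj) ∮_{|z|=1} (Ψ_A(z)-Ψ_B(z))(Ψ_A(z⁻¹)-Ψ_B(z⁻¹)) / ((1-Ψ_A(z))(1-Ψ_A(z⁻¹))) dz/z`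
equals
`Σ_k [∏_ℓ (a_k - b_ℓ) / (a_k ∏_{ℓ≠k} (a_k - a_ℓ))] · [∏_ℓ (1 - a_k b_ℓ*) / ∏_ℓ (1 - a_k a_ℓ*) - 1]`. -/
theorem ar_distance_residue_formula {L : ℕ} (a b : Fin L → ℂ)
    (ha1 : ∀ ℓ, ‖a ℓ‖ < 1) (hb1 : ∀ ℓ, ‖b ℓ‖ < 1)
    (ha0 : ∀ ℓ, a ℓ ≠ 0) (hinj : Function.Injective a)
    (haconj : Finset.univ.val.map (fun ℓ => (starRingEnd ℂ) (a ℓ)) =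
      Finset.univ.val.map a)
    (hbconj : Finset.univ.val.map (fun ℓ => (starRingEnd ℂ) (b ℓ)) =
      Finset.univ.val.map b) :
    (2 * (π : ℂ) * I)⁻¹ *
        (∮ z in C(0, 1),
          (((∏ ℓ, (1 - b ℓ * z⁻¹)) - ∏ ℓ, (1 - a ℓ * z⁻¹)) *
              ((∏ ℓ, (1 - b ℓ * z)) - ∏ ℓ, (1 - a ℓ * z))) /
            ((∏ ℓ, (1 - a ℓ * z⁻¹)) * (∏ ℓ, (1 - a ℓ * z)) * z)) =
      ∑ k, (∏ ℓ, (a k - b ℓ)) / (a k * ∏ ℓ ∈ Finset.univ.erase k, (a k - a ℓ)) *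
        ((∏ ℓ, (1 - a k * (starRingEnd ℂ) (b ℓ))) /
            (∏ ℓ, (1 - a k * (starRingEnd ℂ) (a ℓ))) - 1) := by
  classical
  set Pf : ℂ → ℂ := fun z => ∏ ℓ, (1 - a ℓ * z) with hPfdef
  set Qf : ℂ → ℂ := fun z => ∏ ℓ, (1 - b ℓ * z) with hQfdef
  set φ : ℂ → ℂ := fun z => Qf z / Pf z - 1 with hφdef
  set c : Fin L → ℂ := fun k =>
    (∏ ℓ, (a k - b ℓ)) * (∏ ℓ ∈ Finset.univ.erase k, (a k - a ℓ))⁻¹ * (a k)⁻¹ with hcdef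
  -- nonvanishing of Pf on the closed disc
  have hPne : ∀ z ∈ Metric.closedBall (0 : ℂ) 1, Pf z ≠ 0 := by
    intro z hz
    have hz' : ‖z‖ ≤ 1 := by
      simpa [Complex.dist_eq] using Metric.mem_closedBall.mp hz
    refine Finset.prod_ne_zero_iff.mpr fun ℓ _ => ?_
    intro h
    have h1 : a ℓ * z = 1 := by linear_combination -h
    have h2 := congrArg (‖·‖) h1
    rw [norm_mul, norm_one] at h2
    nlinarith [ha1 ℓ, norm_nonneg z, norm_nonneg (a ℓ)]
  have hPc : Continuous Pf :=
    continuous_finset_prod _ fun i _ => continuous_const.sub (continuous_const.mul continuous_id)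
  have hQc : Continuous Qf :=
    continuous_finset_prod _ fun i _ => continuous_const.sub (continuous_const.mul continuous_id)
  have hφc : ContinuousOn φ (Metric.closedBall (0 : ℂ) 1) :=
    ((hQc.continuousOn.div hPc.continuousOn hPne).sub continuousOn_const)
  have hφd : ∀ x ∈ Metric.ball (0 : ℂ) 1 \ (∅ : Set ℂ), DifferentiableAt ℂ φ x := by
    intro x hx
    have hPd : DifferentiableAt ℂ Pf x :=
      DifferentiableAt.fun_finsetProd fun i _ =>
        (differentiableAt_const _).sub ((differentiableAt_const _).mul differentiableAt_id)
    have hQd : DifferentiableAt ℂ Qf x :=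
      DifferentiableAt.fun_finsetProd fun i _ =>
        (differentiableAt_const _).sub ((differentiableAt_const _).mul differentiableAt_id)
    exact (hQd.div hPd (hPne x (Metric.ball_subset_closedBall hx.1))).sub
      (differentiableAt_const 1)
  have hCauchy : ∀ w ∈ Metric.ball (0 : ℂ) 1,
      (∮ z in C(0, 1), φ z / (z - w)) = 2 * π * I * φ w := fun w hw =>
    Complex.circleIntegral_div_sub_of_differentiable_on_off_countable Set.countable_empty
      hw hφc hφd
  have ha_in : ∀ k, a k ∈ Metric.ball (0 : ℂ) 1 := fun k => by
    simpa [Complex.dist_eq] using ha1 k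
  have hφ0 : φ 0 = 0 := by simp [hφdef, hPfdef, hQfdef]
  -- pointwise identity on the circle
  have hEq : Set.EqOn
      (fun z => (((∏ ℓ, (1 - b ℓ * z⁻¹)) - ∏ ℓ, (1 - a ℓ * z⁻¹)) *
              ((∏ ℓ, (1 - b ℓ * z)) - ∏ ℓ, (1 - a ℓ * z))) /
            ((∏ ℓ, (1 - a ℓ * z⁻¹)) * (∏ ℓ, (1 - a ℓ * z)) * z))
      (fun z => ∑ k, c k * (φ z / (z - a k) - φ z / z)) (Metric.sphere (0 : ℂ) 1) := by
    intro z hz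
    have hzabs : ‖z‖ = 1 := by
      simpa [Complex.dist_eq] using Metric.mem_sphere.mp hz
    have hz0 : z ≠ 0 := by
      intro h; rw [h] at hzabs; simp at hzabs
    have hzk : ∀ k, z - a k ≠ 0 := by
      intro k h
      have hzz : z = a k := sub_eq_zero.mp h
      rw [hzz] at hzabs
      exact (ha1 k).ne hzabs
    have hPz : Pf z ≠ 0 := hPne z (Metric.sphere_subset_closedBall hz)
    have hpk : ∀ k, (∏ ℓ ∈ Finset.univ.erase k, (z - a ℓ)) ≠ 0 := fun k =>
      Finset.prod_ne_zero_iff.mpr fun ℓ _ => hzk ℓ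
    have hak : ∀ k, (∏ ℓ ∈ Finset.univ.erase k, (a k - a ℓ)) ≠ 0 := by
      intro k
      refine Finset.prod_ne_zero_iff.mpr fun ℓ hℓ => sub_ne_zero.mpr fun h => ?_
      exact (Finset.mem_erase.mp hℓ).1 (hinj h.symm)
    have hInv : ∀ c' : Fin L → ℂ,
        ∏ ℓ, (1 - c' ℓ * z⁻¹) = (∏ ℓ, (z - c' ℓ)) * (z⁻¹) ^ L := by
      intro c'
      calc ∏ ℓ, (1 - c' ℓ * z⁻¹) = ∏ ℓ, ((z - c' ℓ) * z⁻¹) :=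
            Finset.prod_congr rfl fun ℓ _ => by rw [sub_mul, mul_inv_cancel₀ hz0]
        _ = (∏ ℓ, (z - c' ℓ)) * (z⁻¹) ^ L := by
            rw [Finset.prod_mul_distrib, Finset.prod_const, Finset.card_univ, Fintype.card_fin]
    have hW : (z⁻¹ : ℂ) ^ L ≠ 0 := pow_ne_zero _ (inv_ne_zero hz0)
    have hAz : (∏ ℓ, (z - a ℓ)) ≠ 0 := Finset.prod_ne_zero_iff.mpr fun ℓ _ => hzk ℓ
    simp only
    rw [hInv a, hInv b, ← sub_mul, lagrange_prod_sub a b hinj z]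
    have hstep :
        ((∑ k, (∏ ℓ, (a k - b ℓ)) * (∏ ℓ ∈ Finset.univ.erase k, (a k - a ℓ))⁻¹ *
            ∏ ℓ ∈ Finset.univ.erase k, (z - a ℓ)) * (z⁻¹) ^ L * (Qf z - Pf z)) /
          ((∏ ℓ, (z - a ℓ)) * (z⁻¹) ^ L * (Pf z) * z) =
        ((∑ k, (∏ ℓ, (a k - b ℓ)) * (∏ ℓ ∈ Finset.univ.erase k, (a k - a ℓ))⁻¹ *
            ∏ ℓ ∈ Finset.univ.erase k, (z - a ℓ)) * (Qf z - Pf z)) /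
          ((∏ ℓ, (z - a ℓ)) * (Pf z) * z) := by
      rw [div_eq_div_iff (by exact mul_ne_zero (mul_ne_zero (mul_ne_zero hAz hW) hPz) hz0)
        (mul_ne_zero (mul_ne_zero hAz hPz) hz0)]
      ring
    rw [hstep, Finset.sum_mul, Finset.sum_div]
    refine Finset.sum_congr rfl fun k _ => ?_
    rw [← Finset.mul_prod_erase Finset.univ (fun ℓ => z - a ℓ) (Finset.mem_univ k)]
    simp only [hcdef, hφdef]
    exact per_k_field _ _ _ _ _ _ _ (hpk k) hPz (ha0 k) hz0 (hzk k)
  -- continuity and integrability of the summands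
  have hca : ∀ k, ContinuousOn (fun z => φ z / (z - a k)) (Metric.sphere (0 : ℂ) 1) := by
    intro k
    refine ContinuousOn.div (hφc.mono Metric.sphere_subset_closedBall)
      ((continuous_id.sub continuous_const).continuousOn) ?_
    intro z hz
    have hzabs : ‖z‖ = 1 := by
      simpa [Complex.dist_eq] using Metric.mem_sphere.mp hz
    intro h
    have hzz : z = a k := sub_eq_zero.mp h
    rw [hzz] at hzabs
    exact (ha1 k).ne hzabs
  have hc0 : ContinuousOn (fun z => φ z / z) (Metric.sphere (0 : ℂ) 1) := by
    refine ContinuousOn.div (hφc.mono Metric.sphere_subset_closedBall) continuousOn_id ?_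
    intro z hz
    have hzabs : ‖z‖ = 1 := by
      simpa [Complex.dist_eq] using Metric.mem_sphere.mp hz
    intro h; rw [h] at hzabs; simp at hzabs
  have hIa : ∀ k, CircleIntegrable (fun z => φ z / (z - a k)) 0 1 := fun k =>
    (hca k).circleIntegrable zero_le_one
  have hI0 : CircleIntegrable (fun z => φ z / z) 0 1 := hc0.circleIntegrable zero_le_one
  have hIk : ∀ k, CircleIntegrable (fun z => c k * (φ z / (z - a k) - φ z / z)) 0 1 := fun k =>
    (continuousOn_const.mul ((hca k).sub hc0)).circleIntegrable zero_le_one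
  have hC0 : (∮ z in C(0, 1), φ z / z) = 2 * π * I * φ 0 := by
    have h := hCauchy 0 (Metric.mem_ball_self one_pos)
    simpa using h
  -- compute the integral
  have hL : (2 * (π : ℂ) * I)⁻¹ *
      (∮ z in C(0, 1),
        (((∏ ℓ, (1 - b ℓ * z⁻¹)) - ∏ ℓ, (1 - a ℓ * z⁻¹)) *
            ((∏ ℓ, (1 - b ℓ * z)) - ∏ ℓ, (1 - a ℓ * z))) /
          ((∏ ℓ, (1 - a ℓ * z⁻¹)) * (∏ ℓ, (1 - a ℓ * z)) * z)) =
      ∑ k, c k * φ (a k) := by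
    rw [circleIntegral.integral_congr zero_le_one hEq]
    rw [circleIntegral_finset_sum _ _ _ _ (fun k _ => hIk k)]
    have hterm : ∀ k, (∮ z in C(0, 1), c k * (φ z / (z - a k) - φ z / z)) =
        c k * (2 * π * I * φ (a k)) := by
      intro k
      rw [circleIntegral.integral_const_mul, circleIntegral.integral_sub (hIa k) hI0,
        hCauchy (a k) (ha_in k), hC0, hφ0, mul_zero, sub_zero]
    simp only [hterm]
    rw [Finset.mul_sum]
    refine Finset.sum_congr rfl fun k _ => ?_
    field_simp [Complex.two_pi_I_ne_zero]
  rw [hL]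
  refine Finset.sum_congr rfl fun k _ => ?_
  have hb' : (∏ ℓ, (1 - a k * (starRingEnd ℂ) (b ℓ))) = Qf (a k) := by
    calc (∏ ℓ, (1 - a k * (starRingEnd ℂ) (b ℓ)))
        = ∏ ℓ, (1 - a k * b ℓ) := prod_comp_eq_of_map_eq hbconj (fun w => 1 - a k * w)
      _ = Qf (a k) := Finset.prod_congr rfl fun ℓ _ => by rw [mul_comm]
  have ha' : (∏ ℓ, (1 - a k * (starRingEnd ℂ) (a ℓ))) = Pf (a k) := by
    calc (∏ ℓ, (1 - a k * (starRingEnd ℂ) (a ℓ)))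
        = ∏ ℓ, (1 - a k * a ℓ) := prod_comp_eq_of_map_eq haconj (fun w => 1 - a k * w)
      _ = Pf (a k) := Finset.prod_congr rfl fun ℓ _ => by rw [mul_comm]
  rw [hb', ha', hcdef, hφdef]
  rw [div_eq_mul_inv, mul_inv]
  ring
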